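/- (Symplectic property of the Hermitian chain) For every E ∈ ℂ: T(Ē)†·Σ_n·T(E) = Σ_n, where Ē is the complex conjugate of E and † denotes the conjugate transpose. -/
import Mathlib


open Matrix

noncomputable def tstep {m : ℕ} (A B C : Matrix (Fin m) (Fin m) ℂ) (E : ℂ) :
    Matrix (Fin m ⊕ Fin m) (Fin m ⊕ Fin m) ℂ :=
  Matrix.fromBlocks (B⁻¹ * (E • 1 - A)) (-(B⁻¹ * C)) 1 0

/-- The transfer matrix `T(E) = t_n(E) ⋯ t_1(E)` (0-indexed: `t_{n-1} ⋯ t_0`). -/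
noncomputable def transfer {n m : ℕ} (A B C : Fin n → Matrix (Fin m) (Fin m) ℂ) (E : ℂ) :
    Matrix (Fin m ⊕ Fin m) (Fin m ⊕ Fin m) ℂ :=
  ((List.ofFn fun k : Fin n => tstep (A k) (B k) (C k) E).reverse).prod

/-- For the Hermitian chain: `C_k = B_{k-1}ᴴ` for `k = 2,…,n` and `C_1 = B_nᴴ`
(indices cyclically shifted, `0`-indexed). -/
noncomputable def hermC {n m : ℕ} (hn : 0 < n) (B : Fin n → Matrix (Fin m) (Fin m) ℂ) :
    Fin n → Matrix (Fin m) (Fin m) ℂ :=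
  fun k => (B ⟨((k : ℕ) + (n - 1)) % n, Nat.mod_lt _ hn⟩)ᴴ

/-- The symplectic form `Σ_n = i·[[0, -B_nᴴ],[B_n, 0]]`. -/
noncomputable def SigmaN {n m : ℕ} (hn : 0 < n) (B : Fin n → Matrix (Fin m) (Fin m) ℂ) :
    Matrix (Fin m ⊕ Fin m) (Fin m ⊕ Fin m) ℂ :=
  Complex.I • Matrix.fromBlocks 0 (-(B ⟨n - 1, by omega⟩)ᴴ) (B ⟨n - 1, by omega⟩) 0

lemma sig_step {m : ℕ} (A B C : Matrix (Fin m) (Fin m) ℂ)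
    (hA : A.IsHermitian) (hB : IsUnit B) (E : ℂ) :
    (tstep A B C (starRingEnd ℂ E))ᴴ * (Complex.I • Matrix.fromBlocks 0 (-Bᴴ) B 0) *
      tstep A B C E = Complex.I • Matrix.fromBlocks 0 (-(Cᴴ)ᴴ) Cᴴ 0 := by
  have hB1 : B * B⁻¹ = 1 := mul_nonsing_inv _ ((Matrix.isUnit_iff_isUnit_det _).mp hB)
  have hB2 : B⁻¹ᴴ * Bᴴ = 1 := by rw [← conjTranspose_mul, hB1, conjTranspose_one]
  have hAH : ((starRingEnd ℂ E) • (1 : Matrix (Fin m) (Fin m) ℂ) - A)ᴴ = E • 1 - A := by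
    simp [conjTranspose_smul, hA.eq]
  unfold tstep
  rw [Matrix.mul_smul, Matrix.smul_mul]
  congr 1
  rw [fromBlocks_conjTranspose, Matrix.fromBlocks_multiply, Matrix.fromBlocks_multiply]
  simp only [conjTranspose_mul, conjTranspose_neg, hAH, Matrix.mul_zero, Matrix.zero_mul,
    Matrix.mul_one, Matrix.one_mul, Matrix.mul_neg, Matrix.neg_mul, neg_neg, add_zero, zero_add,
    conjTranspose_zero, conjTranspose_one, conjTranspose_conjTranspose]
  rw [← Matrix.mul_assoc B, hB1, Matrix.one_mul, Matrix.mul_assoc _ B⁻¹ᴴ, hB2, Matrix.mul_one,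
    add_neg_cancel, ← Matrix.mul_assoc B, hB1, Matrix.one_mul, Matrix.mul_assoc Cᴴ, hB2,
    Matrix.mul_one, neg_zero]

lemma prod_telescope {m : ℕ}
    (t t' S : ℕ → Matrix (Fin m ⊕ Fin m) (Fin m ⊕ Fin m) ℂ) :
    ∀ n : ℕ, (∀ k < n, (t' k)ᴴ * S (k + 1) * t k = S k) →
    ((List.ofFn fun i : Fin n => t' i).reverse.prod)ᴴ * S n *
      (List.ofFn fun i : Fin n => t i).reverse.prod = S 0 := by
  intro n
  induction n with
  | zero => simp
  | succ n ih =>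
    intro h
    have e : ∀ u : ℕ → Matrix (Fin m ⊕ Fin m) (Fin m ⊕ Fin m) ℂ,
        (List.ofFn fun i : Fin (n+1) => u i).reverse.prod
          = u n * (List.ofFn fun i : Fin n => u i).reverse.prod := by
      intro u
      rw [List.ofFn_succ']
      simp [List.prod_concat]
    have h2 : ∀ X, (t' n)ᴴ * (S (n+1) * (t n * X)) = S n * X := by
      intro X
      rw [← Matrix.mul_assoc, ← Matrix.mul_assoc, h n (Nat.lt_succ_self n)]
    rw [e, e, conjTranspose_mul]
    simp only [Matrix.mul_assoc]
    rw [h2, ← Matrix.mul_assoc]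
    exact ih (fun k hk => h k (Nat.lt_succ_of_lt hk))

/-- Symplectic property of the transfer matrix of the Hermitian chain:
`T(Ē)ᴴ · Σ_n · T(E) = Σ_n`. -/
theorem stmt16 {n m : ℕ} (hn : 2 ≤ n) (hm : 1 ≤ m)
    (A B : Fin n → Matrix (Fin m) (Fin m) ℂ)
    (hA : ∀ k, (A k).IsHermitian) (hB : ∀ k, IsUnit (B k)) (E : ℂ) :
    (transfer A B (hermC (by omega) B) (starRingEnd ℂ E))ᴴ * SigmaN (by omega : 0 < n) B *
        transfer A B (hermC (by omega) B) E =
      SigmaN (by omega : 0 < n) B := by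
  have h0 : 0 < n := by omega
  set C := hermC h0 B with hC
  set t : ℕ → Matrix (Fin m ⊕ Fin m) (Fin m ⊕ Fin m) ℂ :=
    fun k => if h : k < n then tstep (A ⟨k, h⟩) (B ⟨k, h⟩) (C ⟨k, h⟩) E else 1 with ht
  set t' : ℕ → Matrix (Fin m ⊕ Fin m) (Fin m ⊕ Fin m) ℂ :=
    fun k => if h : k < n then tstep (A ⟨k, h⟩) (B ⟨k, h⟩) (C ⟨k, h⟩) (starRingEnd ℂ E) else 1
    with ht'
  set S : ℕ → Matrix (Fin m ⊕ Fin m) (Fin m ⊕ Fin m) ℂ :=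
    fun j => Complex.I • Matrix.fromBlocks 0 (-(B ⟨(j + (n - 1)) % n, Nat.mod_lt _ h0⟩)ᴴ)
      (B ⟨(j + (n - 1)) % n, Nat.mod_lt _ h0⟩) 0 with hS
  have hT : ∀ F : ℂ, transfer A B C F = (List.ofFn fun i : Fin n =>
      (fun k : ℕ => if h : k < n then tstep (A ⟨k, h⟩) (B ⟨k, h⟩) (C ⟨k, h⟩) F else 1)
        (i : ℕ)).reverse.prod := by
    intro F
    unfold transfer
    exact congrArg _ (congrArg _ (congrArg List.ofFn (funext fun i => by simp [i.isLt])))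
  have hSn : SigmaN h0 B = S n := by
    have : (n + (n - 1)) % n = n - 1 := by
      have : n + (n - 1) = (n - 1) + n := by omega
      rw [this, Nat.add_mod_right, Nat.mod_eq_of_lt (by omega)]
    have hfin : (⟨(n + (n - 1)) % n, Nat.mod_lt _ h0⟩ : Fin n) = ⟨n - 1, by omega⟩ :=
      Fin.ext this
    simp only [hS, SigmaN, hfin]
  have hS0 : SigmaN h0 B = S 0 := by
    have : (0 + (n - 1)) % n = n - 1 := by
      rw [Nat.zero_add, Nat.mod_eq_of_lt (by omega)]
    have hfin : (⟨(0 + (n - 1)) % n, Nat.mod_lt _ h0⟩ : Fin n) = ⟨n - 1, by omega⟩ :=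
      Fin.ext this
    simp only [hS, SigmaN, hfin]
  have hstep : ∀ k < n, (t' k)ᴴ * S (k + 1) * t k = S k := by
    intro k hk
    have hidx : (k + 1 + (n - 1)) % n = k := by
      have : k + 1 + (n - 1) = k + n := by omega
      rw [this, Nat.add_mod_right, Nat.mod_eq_of_lt hk]
    have hSk1 : S (k + 1) = Complex.I • Matrix.fromBlocks 0 (-(B ⟨k, hk⟩)ᴴ) (B ⟨k, hk⟩) 0 := by
      have hfin : (⟨(k + 1 + (n - 1)) % n, Nat.mod_lt _ h0⟩ : Fin n) = ⟨k, hk⟩ :=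
        Fin.ext hidx
      simp only [hS, hfin]
    have hCk : (C ⟨k, hk⟩)ᴴ = B ⟨(k + (n - 1)) % n, Nat.mod_lt _ h0⟩ := by
      simp [hC, hermC]
    simp only [ht, ht', dif_pos hk, hSk1]
    rw [sig_step _ _ _ (hA _) (hB _)]
    rw [hCk]
  have main := prod_telescope t t' S n hstep
  calc (transfer A B C (starRingEnd ℂ E))ᴴ * SigmaN h0 B * transfer A B C E
      = ((List.ofFn fun i : Fin n => t' i).reverse.prod)ᴴ * S n *
          (List.ofFn fun i : Fin n => t i).reverse.prod := by
        rw [hT, hT, hSn]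
    _ = S 0 := main
    _ = SigmaN h0 B := hS0.symm
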